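/- Let U ⊆ ℂ be open and a,b,c,d,e : U → ℂ holomorphic with a(z)d(z) − b(z)c(z) = e(z)² and e(z) ≠ 0 for all z ∈ U. Set F(z) = e(z)⁻¹ · (a(z), b(z); c(z), d(z)). Then det F(z) = 1 and det F'(z) = e(z)⁻² · (a'(z)d'(z) − b'(z)c'(z) − e'(z)²) for all z ∈ U. In particular, F is null (det F' ≡ 0) if and only if a'd' − b'c' − e'² ≡ 0 on U. -/

import Mathlib

/-!
STATEMENT 15: For holomorphic `a,b,c,d,e` with `ad − bc = e²` and `e ≠ 0` on an
open set `U`, the map `F = e⁻¹ • (a,b;c,d)` has `det F ≡ 1` and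
`det F' = e⁻² (a'd' − b'c' − e'²)`; in particular `F` is null iff
`a'd' − b'c' − e'² ≡ 0` on `U`.
-/

attribute [local instance] Matrix.normedAddCommGroup Matrix.normedSpace

open Matrix

theorem quadric_null_curve_correspondence
    (U : Set ℂ) (hU : IsOpen U)
    (a b c d e : ℂ → ℂ)
    (ha : DifferentiableOn ℂ a U) (hb : DifferentiableOn ℂ b U)
    (hc : DifferentiableOn ℂ c U) (hd : DifferentiableOn ℂ d U)
    (he : DifferentiableOn ℂ e U)
    (hquad : ∀ z ∈ U, a z * d z - b z * c z = (e z) ^ 2)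
    (he0 : ∀ z ∈ U, e z ≠ 0)
    (F : ℂ → Matrix (Fin 2) (Fin 2) ℂ)
    (hF : ∀ z, F z = (e z)⁻¹ • !![a z, b z; c z, d z]) :
    (∀ z ∈ U, (F z).det = 1) ∧
    (∀ z ∈ U, (deriv F z).det =
      ((e z)⁻¹) ^ 2 * (deriv a z * deriv d z - deriv b z * deriv c z - (deriv e z) ^ 2)) ∧
    ((∀ z ∈ U, (deriv F z).det = 0) ↔
      (∀ z ∈ U, deriv a z * deriv d z - deriv b z * deriv c z - (deriv e z) ^ 2 = 0)) := by
  have part2 : ∀ z ∈ U, (deriv F z).det =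
      ((e z)⁻¹) ^ 2 * (deriv a z * deriv d z - deriv b z * deriv c z - (deriv e z) ^ 2) := by
    intro z hz
    have hzU : U ∈ nhds z := hU.mem_nhds hz
    have hE : e z ≠ 0 := he0 z hz
    have ha' : HasDerivAt a (deriv a z) z := (ha.differentiableAt hzU).hasDerivAt
    have hb' : HasDerivAt b (deriv b z) z := (hb.differentiableAt hzU).hasDerivAt
    have hc' : HasDerivAt c (deriv c z) z := (hc.differentiableAt hzU).hasDerivAt
    have hd' : HasDerivAt d (deriv d z) z := (hd.differentiableAt hzU).hasDerivAt
    have he' : HasDerivAt e (deriv e z) z := (he.differentiableAt hzU).hasDerivAt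
    set A := deriv a z; set B := deriv b z; set C := deriv c z; set D := deriv d z
    set E' := deriv e z
    -- derivative of the quadric relation
    have heq : (fun w => a w * d w - b w * c w) =ᶠ[nhds z] (fun w => e w ^ 2) :=
      Filter.eventually_of_mem hzU hquad
    have h1 : HasDerivAt (fun w => a w * d w - b w * c w)
        (A * d z + a z * D - (B * c z + b z * C)) z := (ha'.mul hd').sub (hb'.mul hc')
    have h2 : HasDerivAt (fun w => e w ^ 2) (2 * e z * E') z := by
      simpa [pow_one, mul_comm, mul_assoc] using he'.fun_pow 2
    have key : A * d z + a z * D - (B * c z + b z * C) = 2 * e z * E' :=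
      h1.unique (h2.congr_of_eventuallyEq heq)
    -- derivative of F
    have hFa : HasDerivAt (fun w => a w / e w)
        ((A * e z - a z * E') / e z ^ 2) z := ha'.div he' hE
    have hFb : HasDerivAt (fun w => b w / e w)
        ((B * e z - b z * E') / e z ^ 2) z := hb'.div he' hE
    have hFc : HasDerivAt (fun w => c w / e w)
        ((C * e z - c z * E') / e z ^ 2) z := hc'.div he' hE
    have hFd : HasDerivAt (fun w => d w / e w)
        ((D * e z - d z * E') / e z ^ 2) z := hd'.div he' hE
    have hFD : HasDerivAt F
        !![(A * e z - a z * E') / e z ^ 2, (B * e z - b z * E') / e z ^ 2;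
           (C * e z - c z * E') / e z ^ 2, (D * e z - d z * E') / e z ^ 2] z := by
      apply hasDerivAt_pi.2
      intro i
      apply hasDerivAt_pi.2
      intro j
      have hFe : ∀ w i j, F w i j = !![a w / e w, b w / e w; c w / e w, d w / e w] i j := by
        intro w i j
        rw [hF]
        fin_cases i <;> fin_cases j <;>
          simp [Matrix.smul_apply, div_eq_inv_mul]
      fin_cases i <;> fin_cases j <;>
        · simp only [hFe]
          simpa using (by first | exact hFa | exact hFb | exact hFc | exact hFd :
            HasDerivAt _ _ z)
    rw [show deriv F z = _ from hFD.deriv, Matrix.det_fin_two_of]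
    have hq := hquad z hz
    field_simp
    ring_nf
    linear_combination (-(e z * E')) * key + E' ^ 2 * hq
  refine ⟨?_, part2, ?_⟩
  · intro z hz
    rw [hF, Matrix.det_smul, Fintype.card_fin, Matrix.det_fin_two_of]
    have hq := hquad z hz
    have hE : e z ≠ 0 := he0 z hz
    field_simp
    linear_combination hq
  · constructor
    · intro h z hz
      have h2 := part2 z hz
      rw [h z hz] at h2
      have hE : (e z)⁻¹ ≠ 0 := inv_ne_zero (he0 z hz)
      have := (mul_eq_zero.1 h2.symm).resolve_left (pow_ne_zero 2 hE)
      exact this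
    · intro h z hz
      rw [part2 z hz, h z hz, mul_zero]
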